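/- For the symmetric random walk (p = 1/2) and even n ≥ 0, P(S_1 ≥ 0, S_2 ≥ 0, ..., S_n ≥ 0) = P(S_n = 0) = 2^{−n}·C(n, n/2). -/

import Mathlib

open MeasureTheory ProbabilityTheory Finset

namespace RWaux

def nnb : List ℤ → Bool
  | [] => true
  | (x :: l) => (decide (0 ≤ x + l.sum)) && nnb l

def paths : ℕ → Finset (List ℤ)
  | 0 => {[]}
  | (n+1) => ((paths n).image (fun l => (1:ℤ) :: l)) ∪ ((paths n).image (fun l => (-1:ℤ) :: l))

lemma mem_paths_succ {n : ℕ} {l : List ℤ} :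
    l ∈ paths (n+1) ↔ ∃ l' ∈ paths n, l = (1:ℤ) :: l' ∨ l = (-1:ℤ) :: l' := by
  simp only [paths, mem_union, mem_image]
  constructor
  · rintro (⟨l', h, rfl⟩ | ⟨l', h, rfl⟩) <;> exact ⟨l', h, by simp⟩
  · rintro ⟨l', h, rfl | rfl⟩
    · exact Or.inl ⟨l', h, rfl⟩
    · exact Or.inr ⟨l', h, rfl⟩

lemma length_of_mem_paths : ∀ {n : ℕ} {l : List ℤ}, l ∈ paths n → l.length = n := by
  intro n
  induction n with
  | zero => intro l hl; simp [paths] at hl; simp [hl]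
  | succ n ih =>
    intro l hl
    rw [mem_paths_succ] at hl
    obtain ⟨l', h, rfl | rfl⟩ := hl <;> simp [ih h]

lemma sum_of_mem_paths : ∀ {n : ℕ} {l : List ℤ}, l ∈ paths n →
    l.sum = 2 * (l.count 1 : ℤ) - n := by
  intro n
  induction n with
  | zero => intro l hl; simp [paths] at hl; simp [hl]
  | succ n ih =>
    intro l hl
    rw [mem_paths_succ] at hl
    obtain ⟨l', h, rfl | rfl⟩ := hl
    · simp [List.count_cons, ih h]; push_cast; ring
    · rw [List.sum_cons, List.count_cons, ih h]
      norm_num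
      ring

lemma count_le_of_mem_paths {n : ℕ} {l : List ℤ} (hl : l ∈ paths n) : l.count 1 ≤ n := by
  rw [← length_of_mem_paths hl]; exact List.count_le_length

lemma nnb_sum {l : List ℤ} (h : nnb l) : 0 ≤ l.sum := by
  cases l with
  | nil => simp
  | cons x l =>
    simp only [nnb, Bool.and_eq_true, decide_eq_true_eq] at h
    simpa using h.1

lemma card_filter_succ (n : ℕ) (p : List ℤ → Prop) [DecidablePred p] :
    ((paths (n+1)).filter p).card
      = ((paths n).filter (fun l => p ((1:ℤ) :: l))).card
        + ((paths n).filter (fun l => p ((-1:ℤ) :: l))).card := by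
  have hinj1 : Function.Injective (fun l : List ℤ => (1:ℤ) :: l) := fun a b h => by
    simpa using h
  have hinj2 : Function.Injective (fun l : List ℤ => (-1:ℤ) :: l) := fun a b h => by
    simpa using h
  rw [paths, filter_union]
  rw [Finset.filter_image, Finset.filter_image]
  rw [card_union_of_disjoint, card_image_of_injective _ hinj1, card_image_of_injective _ hinj2]
  rw [Finset.disjoint_left]
  rintro a ha hb
  simp only [mem_image] at ha hb
  obtain ⟨x, _, rfl⟩ := ha
  obtain ⟨y, _, h⟩ := hb
  simp at h

/-- number of paths with j up-steps -/
lemma card_count (n j : ℕ) :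
    ((paths n).filter (fun l => l.count 1 = j)).card = n.choose j := by
  induction n generalizing j with
  | zero =>
    cases j <;> simp [paths, Finset.filter_eq', Finset.filter_singleton]
  | succ n ih =>
    rw [card_filter_succ]
    have h1 : ((paths n).filter (fun l => ((1:ℤ) :: l).count 1 = j)).card
        = (if 1 ≤ j then n.choose (j-1) else 0) := by
      split_ifs with hj
      · rw [← ih (j-1)]
        congr 1
        apply Finset.filter_congr
        intro l _
        simp [List.count_cons]
        omega
      · convert Finset.card_empty
        rw [Finset.filter_eq_empty_iff]
        intro l _
        simp [List.count_cons]
        omega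
    have h2 : ((paths n).filter (fun l => ((-1:ℤ) :: l).count 1 = j)).card = n.choose j := by
      rw [← ih j]
      apply congrArg Finset.card
      apply Finset.filter_congr
      intro l _
      simp [List.count_cons]
    rw [h1, h2]
    rcases j with _ | j
    · simp
    · simp [Nat.choose_succ_succ, Nat.add_comm]

lemma P_zero {n j : ℕ} (h : 2*j < n) :
    ((paths n).filter (fun l => nnb l ∧ l.count 1 = j)).card = 0 := by
  rw [Finset.card_eq_zero, Finset.filter_eq_empty_iff]
  rintro l hl ⟨h1, h2⟩
  have := nnb_sum h1
  rw [sum_of_mem_paths hl, h2] at this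
  omega

lemma ballot : ∀ n j : ℕ, n ≤ 2*j + 1 →
    (((paths n).filter (fun l => nnb l ∧ l.count 1 = j)).card : ℤ)
      = (n.choose j : ℤ) - (n.choose (j+1) : ℤ) := by
  intro n
  induction n with
  | zero =>
    intro j _
    rcases j with _ | j <;>
      simp [paths, Finset.filter_singleton, nnb, Nat.choose]
  | succ n ih =>
    intro j hj
    rw [card_filter_succ]
    have h1 : ((paths n).filter (fun l => nnb ((1:ℤ) :: l) ∧ ((1:ℤ) :: l).count 1 = j)).card
        = ((paths n).filter (fun l => (nnb l ∧ l.count 1 = j - 1) ∧ 1 ≤ j)).card := by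
      apply congrArg
      apply Finset.filter_congr
      intro l hl
      simp only [nnb, Bool.and_eq_true, decide_eq_true_eq, List.count_cons]
      constructor
      · rintro ⟨⟨_, h⟩, hc⟩
        simp at hc
        refine ⟨⟨h, by omega⟩, by omega⟩
      · rintro ⟨⟨h, hc⟩, hj1⟩
        have := nnb_sum h
        refine ⟨⟨by omega, h⟩, by simp; omega⟩
    have h2 : ((paths n).filter (fun l => nnb ((-1:ℤ) :: l) ∧ ((-1:ℤ) :: l).count 1 = j)).card
        = ((paths n).filter (fun l => (nnb l ∧ l.count 1 = j) ∧ n < 2*j)).card := by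
      apply congrArg
      apply Finset.filter_congr
      intro l hl
      simp only [nnb, Bool.and_eq_true, decide_eq_true_eq, List.count_cons]
      have hs := sum_of_mem_paths hl
      constructor
      · rintro ⟨⟨hge, h⟩, hc⟩
        simp at hc
        subst hc
        refine ⟨⟨h, rfl⟩, by omega⟩
      · rintro ⟨⟨h, hc⟩, hlt⟩
        subst hc
        refine ⟨⟨by omega, h⟩, by simp⟩
    rw [h1, h2]
    -- case split
    rcases Nat.lt_or_ge n (2*j) with hcase | hcase
    · -- n < 2j : both terms active
      rcases Nat.eq_zero_or_pos j with rfl | hj1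
      · omega
      have e1 : ((paths n).filter (fun l => (nnb l ∧ l.count 1 = j - 1) ∧ 1 ≤ j)).card
          = ((paths n).filter (fun l => nnb l ∧ l.count 1 = j - 1)).card := by
        congr 1; apply Finset.filter_congr; intro l _
        simp only [and_iff_left_iff_imp]
        intro _; omega
      have e2 : ((paths n).filter (fun l => (nnb l ∧ l.count 1 = j) ∧ n < 2*j)).card
          = ((paths n).filter (fun l => nnb l ∧ l.count 1 = j)).card := by
        congr 1; apply Finset.filter_congr; intro l _; simp [hcase]
      rw [e1, e2]
      push_cast
      rw [ih (j-1) (by omega), ih j (by omega)]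
      obtain ⟨j', rfl⟩ : ∃ j', j = j' + 1 := ⟨j - 1, by omega⟩
      simp only [Nat.add_sub_cancel]
      rw [Nat.choose_succ_succ n j', Nat.choose_succ_succ n (j'+1)]
      push_cast
      ring
    · -- n ≥ 2j : second term empty; and n = 2j or n = 2j+1... from hj : n+1 ≤ 2j+1, n ≤ 2j, so n = 2j
      have hn2j : n = 2*j := by omega
      have e2 : ((paths n).filter (fun l => (nnb l ∧ l.count 1 = j) ∧ n < 2*j)).card = 0 := by
        rw [Finset.card_eq_zero, Finset.filter_eq_empty_iff]
        rintro l _ ⟨_, hlt⟩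
        omega
      rcases Nat.eq_zero_or_pos j with rfl | hj1
      · -- n = 0, j = 0
        have e1 : ((paths n).filter (fun l => (nnb l ∧ l.count 1 = 0 - 1) ∧ 1 ≤ 0)).card = 0 := by
          rw [Finset.card_eq_zero, Finset.filter_eq_empty_iff]
          rintro l _ ⟨_, h⟩; omega
        rw [e1, e2]
        subst hn2j
        norm_num
      · have e1 : ((paths n).filter (fun l => (nnb l ∧ l.count 1 = j - 1) ∧ 1 ≤ j)).card
            = ((paths n).filter (fun l => nnb l ∧ l.count 1 = j - 1)).card := by
          congr 1; apply Finset.filter_congr; intro l _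
          simp only [and_iff_left_iff_imp]
          intro _; omega
        rw [e1, e2, P_zero (by omega)]
        subst hn2j
        have hsymm := Nat.choose_symm_half j
        push_cast
        omega


lemma card_nnb (m : ℕ) :
    (((paths (2*m)).filter (fun l => nnb l)).card : ℤ) = ((2*m).choose m : ℤ) := by
  have hfib : ((paths (2*m)).filter (fun l => nnb l)).card
      = ∑ j ∈ range (2*m+1),
          ((paths (2*m)).filter (fun l => nnb l ∧ l.count 1 = j)).card := by
    rw [Finset.card_eq_sum_card_fiberwise
      (f := fun l : List ℤ => l.count 1) (t := range (2*m+1))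
      (fun l hl => by
        rw [Finset.mem_coe, Finset.mem_filter] at hl
        exact Finset.mem_range.2 (Nat.lt_succ_of_le (count_le_of_mem_paths hl.1)))]
    apply Finset.sum_congr rfl
    intro j _
    rw [Finset.filter_filter]
  rw [hfib]
  push_cast
  have hsplit : (2*m+1) = m + (m+1) := by ring
  rw [hsplit, Finset.sum_range_add]
  have hz : ∑ j ∈ range m,
      (((paths (2*m)).filter (fun l => nnb l ∧ l.count 1 = j)).card : ℤ) = 0 := by
    apply Finset.sum_eq_zero
    intro j hj
    have hjm := Finset.mem_range.1 hj
    rw [P_zero (by omega)]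
    simp
  rw [hz, zero_add]
  have htel : ∑ i ∈ range (m+1),
      (((paths (2*m)).filter (fun l => nnb l ∧ l.count 1 = (m+i))).card : ℤ)
      = ∑ i ∈ range (m+1),
        (((2*m).choose (m+i) : ℤ) - ((2*m).choose (m+(i+1)) : ℤ)) := by
    apply Finset.sum_congr rfl
    intro i _
    rw [ballot (2*m) (m+i) (by omega), Nat.add_assoc]
  rw [htel, Finset.sum_range_sub' (fun i => ((2*m).choose (m+i) : ℤ))]
  have : (2*m).choose (m+(m+1)) = 0 := Nat.choose_eq_zero_of_lt (by omega)
  simp [this]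


lemma card_sum_zero (m : ℕ) :
    ((paths (2*m)).filter (fun l => l.sum = 0)).card = (2*m).choose m := by
  rw [← card_count (2*m) m]
  apply congrArg Finset.card
  apply Finset.filter_congr
  intro l hl
  rw [sum_of_mem_paths hl]
  omega

lemma mem_of_mem_paths : ∀ {n : ℕ} {l : List ℤ}, l ∈ paths n →
    ∀ x ∈ l, x = 1 ∨ x = -1 := by
  intro n
  induction n with
  | zero => intro l hl; simp [paths] at hl; simp [hl]
  | succ n ih =>
    intro l hl
    rw [mem_paths_succ] at hl
    obtain ⟨l', h, rfl | rfl⟩ := hl <;>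
      · intro x hx
        rcases List.mem_cons.1 hx with rfl | hx
        · simp
        · exact ih h x hx

variable {Ω : Type*}

/-- the reversed list of the first n steps -/
def Lw (X : ℕ → Ω → ℤ) : ℕ → Ω → List ℤ
  | 0, _ => []
  | (n+1), ω => X n ω :: Lw X n ω

lemma Lw_sum (X : ℕ → Ω → ℤ) (n : ℕ) (ω : Ω) :
    (Lw X n ω).sum = ∑ i ∈ range n, X i ω := by
  induction n with
  | zero => simp [Lw]
  | succ n ih => rw [Finset.sum_range_succ, Lw, List.sum_cons, ih]; ring

lemma Lw_nnb (X : ℕ → Ω → ℤ) (n : ℕ) (ω : Ω) :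
    nnb (Lw X n ω) = true ↔ ∀ m ≤ n, 0 ≤ ∑ i ∈ range m, X i ω := by
  induction n with
  | zero =>
    simp only [Lw, nnb]
    constructor
    · intro _ m hm
      interval_cases m
      simp
    · intro _; trivial
  | succ n ih =>
    simp only [Lw, nnb, Bool.and_eq_true, decide_eq_true_eq, ih]
    rw [Lw_sum]
    constructor
    · rintro ⟨h1, h2⟩ m hm
      rcases Nat.lt_succ_iff_lt_or_eq.1 (Nat.lt_succ_of_le hm) with h | rfl
      · exact h2 m (by omega)
      · rw [Finset.sum_range_succ] at *
        linarith
    · intro h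
      refine ⟨?_, fun m hm => h m (by omega)⟩
      have := h (n+1) le_rfl
      rw [Finset.sum_range_succ] at this
      linarith

lemma Lw_mem_paths {X : ℕ → Ω → ℤ} {n : ℕ} {ω : Ω}
    (h : ∀ i < n, X i ω = 1 ∨ X i ω = -1) : Lw X n ω ∈ paths n := by
  induction n with
  | zero => simp [Lw, paths]
  | succ n ih =>
    rw [Lw, mem_paths_succ]
    refine ⟨Lw X n ω, ih (fun i hi => h i (by omega)), ?_⟩
    rcases h n (by omega) with h' | h' <;> rw [h'] <;> simp

lemma Lw_eq_iff {X : ℕ → Ω → ℤ} : ∀ {n : ℕ} {ω : Ω} {l : List ℤ}, l.length = n →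
    (Lw X n ω = l ↔ ∀ i < n, X i ω = l.getD (n - 1 - i) 0) := by
  intro n
  induction n with
  | zero =>
    intro ω l hl
    rw [List.length_eq_zero_iff] at hl
    subst hl
    simp [Lw]
  | succ n ih =>
    intro ω l hl
    rcases l with _ | ⟨x, t⟩
    · simp at hl
    have ht : t.length = n := by simpa using hl
    rw [Lw, List.cons_eq_cons, ih ht]
    constructor
    · rintro ⟨rfl, h⟩ i hi
      rcases Nat.lt_succ_iff_lt_or_eq.1 hi with h' | rfl
      · have : n + 1 - 1 - i = (n - 1 - i) + 1 := by omega
        rw [this, List.getD_cons_succ]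
        exact h i h'
      · simp
    · intro h
      constructor
      · have := h n (by omega)
        simpa using this
      · intro i hi
        have := h i (by omega)
        have e : n + 1 - 1 - i = (n - 1 - i) + 1 := by omega
        rwa [e, List.getD_cons_succ] at this

open MeasureTheory ProbabilityTheory
open scoped ENNReal

variable [MeasurableSpace Ω] {μ : Measure Ω}

lemma atom_eq {X : ℕ → Ω → ℤ} {n : ℕ} {l : List ℤ} (hl : l.length = n) :
    {ω | Lw X n ω = l} = ⋂ i ∈ Finset.range n, X i ⁻¹' {l.getD (n-1-i) 0} := by
  ext ω
  simp only [Set.mem_setOf_eq, Set.mem_iInter, Set.mem_preimage, Set.mem_singleton_iff,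
    Finset.mem_range]
  exact Lw_eq_iff hl

lemma meas_atom [IsProbabilityMeasure μ] {X : ℕ → Ω → ℤ}
    (hindep : iIndepFun X μ)
    (hX1 : ∀ i, μ {ω | X i ω = 1} = ENNReal.ofReal (1 / 2))
    (hX2 : ∀ i, μ {ω | X i ω = -1} = ENNReal.ofReal (1 / 2))
    {n : ℕ} {l : List ℤ} (hl : l ∈ paths n) :
    μ {ω | Lw X n ω = l} = (ENNReal.ofReal (1/2))^n := by
  rw [atom_eq (length_of_mem_paths hl)]
  rw [hindep.measure_inter_preimage_eq_mul (range n)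
    (sets := fun i => {l.getD (n-1-i) 0}) (fun i _ => measurableSet_singleton _)]
  rw [Finset.prod_congr rfl (g := fun _ => ENNReal.ofReal (1/2)) (fun i hi => ?_),
    Finset.prod_const, Finset.card_range]
  have hi' := Finset.mem_range.1 hi
  have hlen : n - 1 - i < l.length := by rw [length_of_mem_paths hl]; omega
  have hmem : l.getD (n-1-i) 0 ∈ l := by
    rw [List.getD_eq_getElem _ _ hlen]
    exact List.getElem_mem _
  rcases mem_of_mem_paths hl _ hmem with h | h <;> rw [h]
  · exact hX1 i
  · exact hX2 i

lemma null_bad [IsProbabilityMeasure μ] {X : ℕ → Ω → ℤ} (hmeas : ∀ i, Measurable (X i))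
    (hX1 : ∀ i, μ {ω | X i ω = 1} = ENNReal.ofReal (1 / 2))
    (hX2 : ∀ i, μ {ω | X i ω = -1} = ENNReal.ofReal (1 / 2))
    (n : ℕ) :
    μ (⋃ i ∈ Finset.range n, {ω | ¬(X i ω = 1 ∨ X i ω = -1)}) = 0 := by
  apply measure_biUnion_null_iff (Finset.countable_toSet _) |>.2
  intro i _
  have hd : Disjoint {ω | X i ω = 1} {ω | X i ω = -1} := by
    rw [Set.disjoint_left]
    rintro ω h1 h2
    simp only [Set.mem_setOf_eq] at h1 h2
    rw [h1] at h2
    norm_num at h2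
  have hm1 : MeasurableSet {ω | X i ω = 1} := hmeas i (measurableSet_singleton 1)
  have hm2 : MeasurableSet {ω | X i ω = -1} := hmeas i (measurableSet_singleton (-1))
  have hu : μ ({ω | X i ω = 1} ∪ {ω | X i ω = -1}) = 1 := by
    rw [measure_union hd hm2, hX1 i, hX2 i]
    rw [← ENNReal.ofReal_add (by norm_num) (by norm_num)]
    norm_num
  have : {ω | ¬(X i ω = 1 ∨ X i ω = -1)} = ({ω | X i ω = 1} ∪ {ω | X i ω = -1})ᶜ := by
    ext ω; simp [Set.mem_union]
  rw [this, measure_compl (hm1.union hm2) (measure_ne_top μ _), hu, measure_univ]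
  simp

lemma meas_event [IsProbabilityMeasure μ] {X : ℕ → Ω → ℤ} (hmeas : ∀ i, Measurable (X i))
    (hindep : iIndepFun X μ)
    (hX1 : ∀ i, μ {ω | X i ω = 1} = ENNReal.ofReal (1 / 2))
    (hX2 : ∀ i, μ {ω | X i ω = -1} = ENNReal.ofReal (1 / 2))
    (n : ℕ) (p : List ℤ → Prop) [DecidablePred p] :
    μ {ω | p (Lw X n ω)}
      = (((paths n).filter p).card : ℝ≥0∞) * (ENNReal.ofReal (1/2))^n := by
  set F := (paths n).filter p with hF
  set U := ⋃ l ∈ F, {ω | Lw X n ω = l} with hU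
  have hatom_meas : ∀ l ∈ F, MeasurableSet {ω | Lw X n ω = l} := by
    intro l hlF
    have hl : l ∈ paths n := (Finset.mem_filter.1 hlF).1
    rw [atom_eq (length_of_mem_paths hl)]
    exact Finset.measurableSet_biInter _ (fun i _ => hmeas i (measurableSet_singleton _))
  have hdisj : (↑F : Set (List ℤ)).PairwiseDisjoint (fun l => {ω | Lw X n ω = l}) := by
    intro a _ b _ hab
    rw [Function.onFun, Set.disjoint_left]
    rintro ω h1 h2
    simp only [Set.mem_setOf_eq] at h1 h2
    exact hab (h1 ▸ h2 ▸ rfl)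
  have hUmeas : μ U = (F.card : ℝ≥0∞) * (ENNReal.ofReal (1/2))^n := by
    rw [hU, measure_biUnion_finset hdisj hatom_meas]
    rw [Finset.sum_congr rfl (g := fun _ => (ENNReal.ofReal (1/2))^n)
      (fun l hlF => meas_atom hindep hX1 hX2 (Finset.mem_filter.1 hlF).1)]
    rw [Finset.sum_const]
    simp [mul_comm, hF]
  have hUsub : U ⊆ {ω | p (Lw X n ω)} := by
    intro ω hω
    simp only [hU, Set.mem_iUnion] at hω
    obtain ⟨l, hlF, hl⟩ := hω
    have := (Finset.mem_filter.1 hlF).2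
    simp only [Set.mem_setOf_eq] at hl ⊢
    rw [hl]
    exact this
  have hEsub : {ω | p (Lw X n ω)} ⊆ U ∪ (⋃ i ∈ Finset.range n, {ω | ¬(X i ω = 1 ∨ X i ω = -1)}) := by
    intro ω hω
    by_cases hgood : ∀ i < n, X i ω = 1 ∨ X i ω = -1
    · left
      have hmem : Lw X n ω ∈ paths n := Lw_mem_paths hgood
      simp only [hU, Set.mem_iUnion]
      exact ⟨Lw X n ω, Finset.mem_filter.2 ⟨hmem, hω⟩, rfl⟩
    · right
      push_neg at hgood
      obtain ⟨i, hi, hbad⟩ := hgood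
      simp only [Set.mem_iUnion]
      refine ⟨i, Finset.mem_range.2 hi, ?_⟩
      simp only [Set.mem_setOf_eq, not_or]
      exact hbad
  have h1 : μ {ω | p (Lw X n ω)} ≤ μ U := by
    calc μ {ω | p (Lw X n ω)} ≤ μ (U ∪ _) := measure_mono hEsub
    _ ≤ μ U + μ (⋃ i ∈ Finset.range n, {ω | ¬(X i ω = 1 ∨ X i ω = -1)}) := measure_union_le _ _
    _ = μ U := by rw [null_bad hmeas hX1 hX2 n, add_zero]
  have h2 : μ U ≤ μ {ω | p (Lw X n ω)} := measure_mono hUsub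
  rw [← hUmeas]
  exact le_antisymm h1 h2

end RWaux

open scoped ENNReal
open RWaux

theorem nonneg_symmetric {Ω : Type*} [MeasurableSpace Ω] (μ : Measure Ω)
    [IsProbabilityMeasure μ]
    (X : ℕ → Ω → ℤ) (hmeas : ∀ i, Measurable (X i))
    (hindep : iIndepFun X μ)
    (hX1 : ∀ i, μ {ω | X i ω = 1} = ENNReal.ofReal (1 / 2))
    (hX2 : ∀ i, μ {ω | X i ω = -1} = ENNReal.ofReal (1 / 2))
    (S : ℕ → Ω → ℤ) (hS : ∀ n ω, S n ω = ∑ i ∈ Finset.range n, X i ω)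
    (n : ℕ) (hn : Even n)
    :
    (μ {ω | ∀ m, 1 ≤ m → m ≤ n → 0 ≤ S m ω}).toReal = (μ {ω | S n ω = 0}).toReal ∧
    (μ {ω | S n ω = 0}).toReal = ((1 : ℝ) / 2) ^ n * (n.choose (n / 2) : ℝ) := by
  obtain ⟨k, hk⟩ := hn
  have hnm : n = 2 * k := by omega
  subst hnm
  have hE1 : {ω | ∀ m, 1 ≤ m → m ≤ 2*k → 0 ≤ S m ω}
      = {ω | nnb (Lw X (2*k) ω) = true} := by
    ext ω
    simp only [Set.mem_setOf_eq]
    rw [Lw_nnb]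
    constructor
    · intro h k hk
      rcases Nat.eq_zero_or_pos k with rfl | hk0
      · simp
      · rw [← hS]; exact h k hk0 hk
    · intro h k hk1 hk2
      rw [hS]; exact h k hk2
  have hE2 : {ω | S (2*k) ω = 0} = {ω | (Lw X (2*k) ω).sum = 0} := by
    ext ω
    simp only [Set.mem_setOf_eq, Lw_sum, hS]
  have hμ1 : μ {ω | ∀ m, 1 ≤ m → m ≤ 2*k → 0 ≤ S m ω}
      = (((2*k).choose k : ℕ) : ℝ≥0∞) * (ENNReal.ofReal (1/2))^(2*k) := by
    rw [hE1, meas_event hmeas hindep hX1 hX2 (2*k) (fun l => nnb l = true)]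
    congr 2
    have := card_nnb k
    exact_mod_cast this
  have hμ2 : μ {ω | S (2*k) ω = 0}
      = (((2*k).choose k : ℕ) : ℝ≥0∞) * (ENNReal.ofReal (1/2))^(2*k) := by
    rw [hE2, meas_event hmeas hindep hX1 hX2 (2*k) (fun l => l.sum = 0)]
    rw [card_sum_zero k]
  have hdiv : (2*k) / 2 = k := by omega
  refine ⟨by rw [hμ1, hμ2], ?_⟩
  rw [hμ2, hdiv]
  rw [ENNReal.toReal_mul, ENNReal.toReal_pow, ENNReal.toReal_ofReal (by norm_num),
    ENNReal.toReal_natCast]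
  ring
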